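/- Let (C, E, s) be a weakly n-exangulated category (satisfying (C1), (C2), (C2'), (C3), (C3')). Then axiom (R0) is automatic: for any morphism of extensions (a, c) : δ → ρ with s(δ) = [X•] and s(ρ) = [Y•], there exists a lift f• = (a, f₁, …, f_n, c) : X• → Y•, i.e., a chain map from X• to Y• whose first component is a and last component is c, satisfying a_*δ = c*ρ compatibility. -/

import Mathlib

open CategoryTheory CategoryTheory.Limits ZeroObject

universe v u

variable {C : Type u} [Category.{v} C] [Preadditive C] [HasZeroObject C]
  [HasFiniteBiproducts C] [HasBinaryBiproducts C]

/-- An additive bifunctor `E : Cᵒᵖ × C ⥤ Ab`, given by its action on objects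
(valued in abelian groups), pushforward along morphisms in the covariant (second)
variable and pullback along morphisms in the contravariant (first) variable. -/
structure AddBifunctor (C : Type u) [Category.{v} C] [Preadditive C] where
  E : C → C → AddCommGrpCat.{v}
  push : ∀ {Z X X' : C}, (X ⟶ X') → E Z X → E Z X'
  pull : ∀ {Z' Z X : C}, (Z' ⟶ Z) → E Z X → E Z' X
  push_id : ∀ {Z X : C} (δ : E Z X), push (𝟙 X) δ = δ
  push_comp : ∀ {Z X X' X'' : C} (f : X ⟶ X') (g : X' ⟶ X'') (δ : E Z X),
      push (f ≫ g) δ = push g (push f δ)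
  pull_id : ∀ {Z X : C} (δ : E Z X), pull (𝟙 Z) δ = δ
  pull_comp : ∀ {Z'' Z' Z X : C} (g : Z'' ⟶ Z') (f : Z' ⟶ Z) (δ : E Z X),
      pull (g ≫ f) δ = pull g (pull f δ)
  pull_push : ∀ {Z' Z X X' : C} (c : Z' ⟶ Z) (a : X ⟶ X') (δ : E Z X),
      pull c (push a δ) = push a (pull c δ)
  push_add : ∀ {Z X X' : C} (a : X ⟶ X') (δ δ' : E Z X),
      push a (δ + δ') = push a δ + push a δ'
  pull_add : ∀ {Z' Z X : C} (c : Z' ⟶ Z) (δ δ' : E Z X),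
      pull c (δ + δ') = pull c δ + pull c δ'
  push_add_hom : ∀ {Z X X' : C} (a a' : X ⟶ X') (δ : E Z X),
      push (a + a') δ = push a δ + push a' δ
  pull_add_hom : ∀ {Z' Z X : C} (c c' : Z' ⟶ Z) (δ : E Z X),
      pull (c + c') δ = pull c δ + pull c' δ

/-- A skeleton of the notion of a (weakly) `n`-exangulated category of
Herschend–Liu–Nakaoka: an additive bifunctor `E` together with a class of
distinguished `n`-exangles `⟨X•, δ⟩` (an `(n+2)`-term complex together with an
extension `δ ∈ E(X_{n+1}, X₀)`), subject to realization, exactness (C1) and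
lifting (C3)/(C3') axioms. -/
structure NExangulated (C : Type u) [Category.{v} C] [Preadditive C]
    [HasZeroObject C] [HasFiniteBiproducts C] (n : ℕ) extends AddBifunctor C where
  distinguished : ∀ (X : ComposableArrows C (n + 1)),
      (E (X.obj' (n + 1)) (X.obj' 0) : Type v) → Prop
  realize : ∀ (A B : C) (δ : E B A), ∃ (X : ComposableArrows C (n + 1))
      (hA : X.obj' 0 = A) (hB : X.obj' (n + 1) = B),
      distinguished X (pull (eqToHom hB) (push (eqToHom hA.symm) δ))
  isComplex : ∀ (X : ComposableArrows C (n + 1)) (δ : E (X.obj' (n + 1)) (X.obj' 0)),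
      distinguished X δ → ∀ (i : ℕ) (hi : i + 2 ≤ n + 1),
      X.map' i (i + 1) ≫ X.map' (i + 1) (i + 2) = 0
  push_d0 : ∀ (X : ComposableArrows C (n + 1)) (δ : E (X.obj' (n + 1)) (X.obj' 0)),
      distinguished X δ → push (X.map' 0 1) δ = 0
  pull_dn : ∀ (X : ComposableArrows C (n + 1)) (δ : E (X.obj' (n + 1)) (X.obj' 0)),
      distinguished X δ → pull (X.map' n (n + 1)) δ = 0
  exact_contra_mid : ∀ (X : ComposableArrows C (n + 1)) (δ : E (X.obj' (n + 1)) (X.obj' 0)),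
      distinguished X δ → ∀ (i : ℕ) (hi : i + 2 ≤ n + 1) (Y : C)
      (g : Y ⟶ X.obj' (i + 1)), g ≫ X.map' (i + 1) (i + 2) = 0 →
      ∃ h : Y ⟶ X.obj' i, h ≫ X.map' i (i + 1) = g
  exact_contra_last : ∀ (X : ComposableArrows C (n + 1)) (δ : E (X.obj' (n + 1)) (X.obj' 0)),
      distinguished X δ → ∀ (Y : C) (g : Y ⟶ X.obj' (n + 1)), pull g δ = 0 →
      ∃ h : Y ⟶ X.obj' n, h ≫ X.map' n (n + 1) = g
  exact_cov_mid : ∀ (X : ComposableArrows C (n + 1)) (δ : E (X.obj' (n + 1)) (X.obj' 0)),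
      distinguished X δ → ∀ (i : ℕ) (hi : i + 2 ≤ n + 1) (Y : C)
      (g : X.obj' (i + 1) ⟶ Y), X.map' i (i + 1) ≫ g = 0 →
      ∃ h : X.obj' (i + 2) ⟶ Y, X.map' (i + 1) (i + 2) ≫ h = g
  exact_cov_first : ∀ (X : ComposableArrows C (n + 1)) (δ : E (X.obj' (n + 1)) (X.obj' 0)),
      distinguished X δ → ∀ (Y : C) (g : X.obj' 0 ⟶ Y), push g δ = 0 →
      ∃ h : X.obj' 1 ⟶ Y, X.map' 0 1 ≫ h = g
  pushLift : ∀ (X : ComposableArrows C (n + 1)) (δ : E (X.obj' (n + 1)) (X.obj' 0))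
      (Y : ComposableArrows C (n + 1)) (ρ : E (Y.obj' (n + 1)) (Y.obj' 0)),
      distinguished X δ → distinguished Y ρ →
      ∀ (a : X.obj' 0 ⟶ Y.obj' 0) (hC : X.obj' (n + 1) = Y.obj' (n + 1)),
      push a δ = pull (eqToHom hC) ρ →
      ∃ f : X ⟶ Y, f.app ⟨0, by omega⟩ = a ∧ f.app ⟨n + 1, by omega⟩ = eqToHom hC
  pullLift : ∀ (X : ComposableArrows C (n + 1)) (δ : E (X.obj' (n + 1)) (X.obj' 0))
      (Y : ComposableArrows C (n + 1)) (ρ : E (Y.obj' (n + 1)) (Y.obj' 0)),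
      distinguished X δ → distinguished Y ρ →
      ∀ (c : X.obj' (n + 1) ⟶ Y.obj' (n + 1)) (hA : X.obj' 0 = Y.obj' 0),
      push (eqToHom hA) δ = pull c ρ →
      ∃ f : X ⟶ Y, f.app ⟨0, by omega⟩ = eqToHom hA ∧ f.app ⟨n + 1, by omega⟩ = c

/-- In a weakly `n`-exangulated category (here encoded by the axioms of
`NExangulated`, in particular the lifting axioms coming from (C3) and (C3')),
the realization axiom (R0) is automatic: any morphism of extensions
`(a, c) : δ → ρ` between distinguished `n`-exangles admits a lift
`f• = (a, f₁, …, f_n, c)`. -/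
theorem R0_automatic {n : ℕ} (T : NExangulated C n)
    (X : ComposableArrows C (n + 1)) (δ : T.E (X.obj' (n + 1)) (X.obj' 0))
    (Y : ComposableArrows C (n + 1)) (ρ : T.E (Y.obj' (n + 1)) (Y.obj' 0))
    (hX : T.distinguished X δ) (hY : T.distinguished Y ρ)
    (a : X.obj' 0 ⟶ Y.obj' 0) (c : X.obj' (n + 1) ⟶ Y.obj' (n + 1))
    (hac : T.push a δ = T.pull c ρ) :
    ∃ f : X ⟶ Y, f.app ⟨0, by omega⟩ = a ∧ f.app ⟨n + 1, by omega⟩ = c := by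
  obtain ⟨Z, hA, hB, hZ⟩ := T.realize (Y.obj' 0) (X.obj' (n + 1)) (T.push a δ)
  set ζ := T.pull (eqToHom hB) (T.push (eqToHom hA.symm) (T.push a δ)) with hζ
  -- lift X ⟶ Z along a
  have h1 : T.push (a ≫ eqToHom hA.symm) δ = T.pull (eqToHom hB.symm) ζ := by
    rw [hζ, ← T.pull_comp, eqToHom_trans, eqToHom_refl, T.pull_id, T.push_comp]
  obtain ⟨f₁, hf₁0, hf₁n⟩ := T.pushLift X δ Z ζ hX hZ (a ≫ eqToHom hA.symm) hB.symm h1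
  -- lift Z ⟶ Y along c
  have h2 : T.push (eqToHom hA) ζ = T.pull (eqToHom hB ≫ c) ρ := by
    rw [hζ, T.pull_push, ← T.push_comp, eqToHom_trans, eqToHom_refl, T.push_id, hac,
      T.pull_comp]
  obtain ⟨f₂, hf₂0, hf₂n⟩ := T.pullLift Z ζ Y ρ hZ hY (eqToHom hB ≫ c) hA h2
  refine ⟨f₁ ≫ f₂, ?_, ?_⟩
  · rw [NatTrans.comp_app, hf₁0, hf₂0, Category.assoc, eqToHom_trans, eqToHom_refl,
      Category.comp_id]
  · rw [NatTrans.comp_app, hf₁n, hf₂n, ← Category.assoc, eqToHom_trans, eqToHom_refl,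
      Category.id_comp]
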